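/- Let A = P₁ − R₁ + S₁ = P₂ − R₂ + S₂ be two convergent double weak splittings of type II of a symmetric nonsingular matrix A ∈ ℝ^{n×n}, with iteration matrices W̃₁ and W̃₂ respectively. If R₁P₁⁻¹ ≥ R₂P₂⁻¹ and AP₁⁻¹ ≥ AP₂⁻¹, then ρ(W̃₁) ≤ ρ(W̃₂) < 1. -/

import Mathlib

open Matrix Filter Topology
open scoped ENNReal NNReal

/-- The spectral radius of a real square matrix: the maximum (supremum) of the
moduli of its complex eigenvalues. -/
noncomputable def specRad {n : Type*} [Fintype n] [DecidableEq n]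
    (B : Matrix n n ℝ) : ℝ :=
  sSup ((fun z : ℂ => ‖z‖) '' spectrum ℂ (B.map Complex.ofReal))

/-- Entrywise order on real matrices: `entryLE A B` means every entry of `A` is
at most the corresponding entry of `B`. -/
def entryLE {m n : Type*} (A B : Matrix m n ℝ) : Prop :=
  ∀ i j, A i j ≤ B i j

/-- `X` is the Moore–Penrose inverse of `A`. -/
def IsMoorePenrose {m n : Type*} [Fintype m] [Fintype n]
    (A : Matrix m n ℝ) (X : Matrix n m ℝ) : Prop :=
  A * X * A = A ∧ X * A * X = X ∧ (A * X)ᵀ = A * X ∧ (X * A)ᵀ = X * A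

/-- Iteration matrix of a double weak splitting of type II:
`W̃ = [[(RP⁻¹)ᵀ, −(SP⁻¹)ᵀ],[I, 0]]`. -/
noncomputable def itMatII {n : Type*} [Fintype n] [DecidableEq n]
    (P R S : Matrix n n ℝ) : Matrix (n ⊕ n) (n ⊕ n) ℝ :=
  Matrix.fromBlocks ((R * P⁻¹)ᵀ) (-((S * P⁻¹)ᵀ)) 1 0

/-- Iteration matrix of a double weak splitting of type I:
`Ŵ = [[P⁻¹R, −P⁻¹S],[I, 0]]`. -/
noncomputable def itMatI {n : Type*} [Fintype n] [DecidableEq n]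
    (P R S : Matrix n n ℝ) : Matrix (n ⊕ n) (n ⊕ n) ℝ :=
  Matrix.fromBlocks (P⁻¹ * R) (-(P⁻¹ * S)) 1 0

section Aux
attribute [local instance] Matrix.linftyOpNormedRing Matrix.linftyOpNormedAlgebra

variable {m : Type*} [Fintype m] [DecidableEq m]

lemma specRad_nonneg (B : Matrix m m ℝ) : 0 ≤ specRad B :=
  Real.sSup_nonneg (by rintro x ⟨μ, -, rfl⟩; exact norm_nonneg μ)

lemma specRad_isEmpty [IsEmpty m] (B : Matrix m m ℝ) : specRad B = 0 := by
  haveI : Subsingleton (Matrix m m ℂ) := ⟨fun a b => Matrix.ext fun i => isEmptyElim i⟩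
  have h : spectrum ℂ (B.map Complex.ofReal) = ∅ := by
    ext μ; simp [spectrum.mem_iff, isUnit_of_subsingleton]
  simp [specRad, h, Real.sSup_empty]

lemma nnnorm_map_ofReal (B : Matrix m m ℝ) : ‖(B.map Complex.ofReal)‖₊ = ‖B‖₊ := by
  rw [Matrix.linfty_opNNNorm_def, Matrix.linfty_opNNNorm_def]
  congr 1; ext i; simp [Matrix.map_apply]

variable [Nonempty m]

lemma sSup_mem_specRad (B : Matrix m m ℝ) :
    specRad B ∈ (fun z : ℂ => ‖z‖) '' spectrum ℂ (B.map Complex.ofReal) := by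
  have hc : IsCompact ((fun z : ℂ => ‖z‖) '' spectrum ℂ (B.map Complex.ofReal)) :=
    (spectrum.isCompact _).image continuous_norm
  exact hc.sSup_mem ((spectrum.nonempty _).image _)

lemma abs_le_specRad (B : Matrix m m ℝ) {μ : ℂ}
    (hμ : μ ∈ spectrum ℂ (B.map Complex.ofReal)) : ‖μ‖ ≤ specRad B := by
  have hc : IsCompact ((fun z : ℂ => ‖z‖) '' spectrum ℂ (B.map Complex.ofReal)) :=
    (spectrum.isCompact _).image continuous_norm
  exact le_csSup hc.bddAbove ⟨μ, hμ, rfl⟩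

lemma spectralRadius_eq_specRad (B : Matrix m m ℝ) :
    spectralRadius ℂ (B.map Complex.ofReal) = ENNReal.ofReal (specRad B) := by
  apply le_antisymm
  · apply iSup₂_le
    intro μ hμ
    rw [← enorm_eq_nnnorm, ← ofReal_norm]
    exact ENNReal.ofReal_le_ofReal (abs_le_specRad B hμ)
  · obtain ⟨μ, hμ, hμeq⟩ := sSup_mem_specRad B
    rw [← hμeq]; beta_reduce; rw [ofReal_norm, enorm_eq_nnnorm]
    exact le_iSup₂ (f := fun k (_ : k ∈ spectrum ℂ (B.map Complex.ofReal)) => (‖k‖₊ : ℝ≥0∞)) μ hμ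

end Aux

section Aux2
attribute [local instance] Matrix.linftyOpNormedRing Matrix.linftyOpNormedAlgebra

variable {m : Type*} [Fintype m] [DecidableEq m]

lemma matrix_map_pow (B : Matrix m m ℝ) (k : ℕ) :
    (B ^ k).map Complex.ofReal = (B.map Complex.ofReal) ^ k := by
  have := map_pow (Complex.ofRealHom.mapMatrix (m := m)) B k
  exact this

lemma exists_eigenvector [Nonempty m] (B : Matrix m m ℝ) :
    ∃ (μ : ℂ) (z : m → ℂ), z ≠ 0 ∧ (B.map Complex.ofReal) *ᵥ z = μ • z ∧
      ‖μ‖ = specRad B := by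
  obtain ⟨μ, hμ, hμeq⟩ := sSup_mem_specRad B
  have he : Matrix.toLin' (B.map Complex.ofReal)
      = Matrix.toLinAlgEquiv (Pi.basisFun ℂ m) (B.map Complex.ofReal) := by
    rw [← Matrix.toLin_eq_toLin']; rfl
  have hμ' : μ ∈ spectrum ℂ (Matrix.toLin' (B.map Complex.ofReal)) := by
    rw [he, AlgEquiv.spectrum_eq]; exact hμ
  have h1 : Module.End.HasEigenvalue (Matrix.toLin' (B.map Complex.ofReal)) μ :=
    Module.End.hasEigenvalue_iff_mem_spectrum.mpr hμ'
  obtain ⟨z, hz⟩ := h1.exists_hasEigenvector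
  refine ⟨μ, z, hz.2, ?_, hμeq⟩
  have := Module.End.mem_eigenspace_iff.mp hz.1
  rwa [Matrix.toLin'_apply] at this

lemma le_specRad_of_mulVec_le [Nonempty m] (B : Matrix m m ℝ)
    (hB : ∀ i j, 0 ≤ B i j) {y : m → ℝ} (hy : ∀ i, 0 ≤ y i) (hy0 : y ≠ 0)
    {c : ℝ} (hc : 0 ≤ c) (h : ∀ i, c * y i ≤ (B *ᵥ y) i) : c ≤ specRad B := by
  classical
  -- iterate the inequality
  have hiter : ∀ k : ℕ, ∀ i, c ^ k * y i ≤ ((B ^ k) *ᵥ y) i := by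
    intro k
    induction k with
    | zero => intro i; simp [Matrix.one_mulVec]
    | succ k ih =>
      intro i
      have h1 : (B ^ (k + 1)) *ᵥ y = B *ᵥ ((B ^ k) *ᵥ y) := by
        rw [Matrix.mulVec_mulVec, ← pow_succ']
      rw [h1]
      calc c ^ (k + 1) * y i = c ^ k * (c * y i) := by ring
        _ ≤ c ^ k * ((B *ᵥ y) i) :=
            mul_le_mul_of_nonneg_left (h i) (pow_nonneg hc k)
        _ = ∑ j, B i j * (c ^ k * y j) := by
            simp [Matrix.mulVec, dotProduct, Finset.mul_sum]; ring_nf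
        _ ≤ ∑ j, B i j * (((B ^ k) *ᵥ y) j) :=
            Finset.sum_le_sum fun j _ => mul_le_mul_of_nonneg_left (ih j) (hB i j)
        _ = (B *ᵥ ((B ^ k) *ᵥ y)) i := by simp [Matrix.mulVec, dotProduct]
  -- a nonzero coordinate
  obtain ⟨i₀, hi₀⟩ : ∃ i, y i ≠ 0 := Function.ne_iff.mp hy0
  have hyi₀ : 0 < y i₀ := lt_of_le_of_ne (hy i₀) (Ne.symm hi₀)
  -- norm bound
  have key : ∀ k : ℕ, c ^ k ≤ ‖B ^ k‖ * (‖y‖ / y i₀) := by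
    intro k
    have h1 : c ^ k * y i₀ ≤ ((B ^ k) *ᵥ y) i₀ := hiter k i₀
    have h2 : ((B ^ k) *ᵥ y) i₀ ≤ ‖(B ^ k) *ᵥ y‖ :=
      le_trans (le_abs_self _) (norm_le_pi_norm ((B ^ k) *ᵥ y) i₀)
    have h3 : ‖(B ^ k) *ᵥ y‖ ≤ ‖B ^ k‖ * ‖y‖ := Matrix.linfty_opNorm_mulVec _ _
    rw [← mul_div_assoc, le_div_iff₀ hyi₀]
    exact le_trans h1 (le_trans h2 h3)
  -- Gelfand's formula
  set a := B.map Complex.ofReal with ha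
  have hnorm : ∀ k : ℕ, ‖a ^ k‖ = ‖B ^ k‖ := by
    intro k
    rw [ha, ← matrix_map_pow, ← coe_nnnorm, ← coe_nnnorm, nnnorm_map_ofReal]
  have hT := spectrum.pow_norm_pow_one_div_tendsto_nhds_spectralRadius a
  rw [ha, spectralRadius_eq_specRad B] at hT
  have hg : Tendsto (fun k : ℕ => ‖B ^ k‖ ^ (1 / (k:ℝ))) atTop (𝓝 (specRad B)) := by
    have h1 : Tendsto (fun k : ℕ => ENNReal.ofReal (‖B ^ k‖ ^ (1 / (k:ℝ)))) atTop
        (𝓝 (ENNReal.ofReal (specRad B))) := by simpa only [show ∀ k : ℕ, ‖(B.map Complex.ofReal) ^ k‖ = ‖B ^ k‖ from hnorm] using hT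
    have h2 := (ENNReal.tendsto_toReal
      (by simp : ENNReal.ofReal (specRad B) ≠ ⊤)).comp h1
    have h3 : (fun k : ℕ => (ENNReal.ofReal (‖B ^ k‖ ^ (1 / (k:ℝ)))).toReal)
        = fun k : ℕ => ‖B ^ k‖ ^ (1 / (k:ℝ)) :=
      funext fun k => ENNReal.toReal_ofReal (Real.rpow_nonneg (norm_nonneg _) _)
    rw [Function.comp_def, h3, ENNReal.toReal_ofReal (specRad_nonneg B)] at h2
    exact h2
  set K := ‖y‖ / y i₀ with hK
  have hK1 : (1:ℝ) ≤ K := by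
    rw [hK, le_div_iff₀ hyi₀, one_mul]
    exact le_trans (le_abs_self _) (norm_le_pi_norm y i₀)
  have hKpos : (0:ℝ) < K := lt_of_lt_of_le one_pos hK1
  have hcomp : ∀ k : ℕ, 1 ≤ k → c / K ^ (1/(k:ℝ)) ≤ ‖B ^ k‖ ^ (1/(k:ℝ)) := by
    intro k hk
    have hkR : (0:ℝ) < k := by exact_mod_cast hk
    have hKr : 0 < K ^ (1/(k:ℝ)) := Real.rpow_pos_of_pos hKpos _
    rw [div_le_iff₀ hKr]
    have h5 : c ^ (k:ℝ) ≤ ‖B ^ k‖ * K := by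
      rw [Real.rpow_natCast]; exact key k
    have h6 : (c ^ (k:ℝ)) ^ (1/(k:ℝ)) ≤ (‖B ^ k‖ * K) ^ (1/(k:ℝ)) :=
      Real.rpow_le_rpow (Real.rpow_nonneg hc _) h5 (by positivity)
    have h7 : (c ^ (k:ℝ)) ^ (1/(k:ℝ)) = c := by
      rw [← Real.rpow_mul hc, mul_one_div, div_self (ne_of_gt hkR), Real.rpow_one]
    have h8 : (‖B ^ k‖ * K) ^ (1/(k:ℝ)) = ‖B ^ k‖ ^ (1/(k:ℝ)) * K ^ (1/(k:ℝ)) :=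
      Real.mul_rpow (norm_nonneg _) (le_of_lt hKpos)
    rw [h7, h8] at h6; exact h6
  have hlim2 : Tendsto (fun k : ℕ => c / K ^ (1/(k:ℝ))) atTop (𝓝 c) := by
    have hKe : Tendsto (fun k : ℕ => K ^ (1/(k:ℝ))) atTop (𝓝 1) := by
      have h9 := (Real.continuousAt_const_rpow (a := K) (b := 0)
        (ne_of_gt hKpos)).tendsto.comp tendsto_one_div_atTop_nhds_zero_nat
      simpa [Function.comp_def, Real.rpow_zero] using h9
    have h10 := Filter.Tendsto.div (tendsto_const_nhds (x := c)) hKe one_ne_zero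
    simpa [Pi.div_def] using h10
  exact le_of_tendsto_of_tendsto hlim2 hg (eventually_atTop.mpr ⟨1, hcomp⟩)

end Aux2

theorem stmt10 {n : ℕ} (A P₁ R₁ S₁ P₂ R₂ S₂ : Matrix (Fin n) (Fin n) ℝ)
    (hAsym : Aᵀ = A) (hAinv : IsUnit A.det)
    -- two double weak splittings of type II
    (hsplit₁ : A = P₁ - R₁ + S₁) (hPinv₁ : IsUnit P₁.det)
    (hRP₁ : entryLE 0 (R₁ * P₁⁻¹)) (hSP₁ : entryLE 0 (-(S₁ * P₁⁻¹)))
    (hsplit₂ : A = P₂ - R₂ + S₂) (hPinv₂ : IsUnit P₂.det)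
    (hRP₂ : entryLE 0 (R₂ * P₂⁻¹)) (hSP₂ : entryLE 0 (-(S₂ * P₂⁻¹)))
    -- both splittings are convergent
    (hconv₁ : specRad (itMatII P₁ R₁ S₁) < 1)
    (hconv₂ : specRad (itMatII P₂ R₂ S₂) < 1)
    (hR : entryLE (R₂ * P₂⁻¹) (R₁ * P₁⁻¹)) (hAP : entryLE (A * P₂⁻¹) (A * P₁⁻¹)) :
    specRad (itMatII P₁ R₁ S₁) ≤ specRad (itMatII P₂ R₂ S₂) ∧
      specRad (itMatII P₂ R₂ S₂) < 1 := by
  refine ⟨?_, hconv₂⟩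
  rcases Nat.eq_zero_or_pos n with hn | hn
  · subst hn
    rw [specRad_isEmpty, specRad_isEmpty]
  haveI : Nonempty (Fin n) := ⟨⟨0, hn⟩⟩
  set ρ := specRad (itMatII P₁ R₁ S₁) with hρ
  have hρ0 : 0 ≤ ρ := specRad_nonneg _
  have hρ1 : ρ ≤ 1 := le_of_lt hconv₁
  obtain ⟨μ, z, hz0, hzeq, hμabs⟩ := exists_eigenvector (itMatII P₁ R₁ S₁)
  -- block equations
  have hbot : ∀ i, z (Sum.inl i) = μ * z (Sum.inr i) := by
    intro i
    have h := congrFun hzeq (Sum.inr i)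
    simp [itMatII, Matrix.mulVec, dotProduct, Fintype.sum_sum_type,
      Matrix.fromBlocks_map, Matrix.map_apply, Matrix.one_apply,
      apply_ite Complex.ofReal, Complex.ofReal_one, Complex.ofReal_zero,
      Finset.sum_ite_eq] at h
    exact h
  have htop : ∀ i, μ * z (Sum.inl i) =
      (∑ j, ((R₁ * P₁⁻¹) j i : ℂ) * z (Sum.inl j))
        + ∑ j, ((-(S₁ * P₁⁻¹)) j i : ℂ) * z (Sum.inr j) := by
    intro i
    have h := congrFun hzeq (Sum.inl i)
    simp [itMatII, Matrix.mulVec, dotProduct, Fintype.sum_sum_type,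
      Matrix.fromBlocks_map, Matrix.map_apply] at h
    simp only [← Matrix.transpose_mul, Matrix.transpose_apply] at h
    rw [← h]
    simp [Matrix.neg_apply, Complex.ofReal_neg, neg_mul, Finset.sum_neg_distrib]
  set v : Fin n → ℝ := fun i => ‖z (Sum.inr i)‖ with hv
  have hv0 : ∀ i, 0 ≤ v i := fun i => norm_nonneg _
  have hvinl : ∀ i, ‖z (Sum.inl i)‖ = ρ * v i := by
    intro i; rw [hbot i, norm_mul, hμabs, ← hρ]
  have hvne : v ≠ 0 := by
    intro hcon
    apply hz0
    have hz2 : ∀ i, z (Sum.inr i) = 0 := fun i => by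
      have h0 : ‖z (Sum.inr i)‖ = 0 := congrFun hcon i
      exact norm_eq_zero.mp h0
    funext i
    cases i with
    | inl i => simp [hbot i, hz2 i]
    | inr i => simp [hz2 i]
  -- matrix identities for -(S·P⁻¹)
  have hid₁ : -(S₁ * P₁⁻¹) = 1 - R₁ * P₁⁻¹ - A * P₁⁻¹ := by
    have h : A * P₁⁻¹ = 1 - R₁ * P₁⁻¹ + S₁ * P₁⁻¹ := by
      rw [hsplit₁, Matrix.add_mul, Matrix.sub_mul, Matrix.mul_nonsing_inv _ hPinv₁]
    rw [h]; abel
  have hid₂ : -(S₂ * P₂⁻¹) = 1 - R₂ * P₂⁻¹ - A * P₂⁻¹ := by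
    have h : A * P₂⁻¹ = 1 - R₂ * P₂⁻¹ + S₂ * P₂⁻¹ := by
      rw [hsplit₂, Matrix.add_mul, Matrix.sub_mul, Matrix.mul_nonsing_inv _ hPinv₂]
    rw [h]; abel
  -- entrywise comparison of coefficients
  have key : ∀ j i, ρ * (R₁ * P₁⁻¹) j i + (-(S₁ * P₁⁻¹)) j i ≤
      ρ * (R₂ * P₂⁻¹) j i + (-(S₂ * P₂⁻¹)) j i := by
    intro j i
    have e₁ := congrFun (congrFun hid₁ j) i
    have e₂ := congrFun (congrFun hid₂ j) i
    simp only [Matrix.neg_apply, Matrix.sub_apply] at e₁ e₂ ⊢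
    rw [e₁, e₂]
    have h1 := hR j i
    have h2 := hAP j i
    nlinarith [mul_nonneg (sub_nonneg.mpr hρ1) (sub_nonneg.mpr (hR j i))]
  -- the key inequality for v
  have star : ∀ i, ρ ^ 2 * v i ≤
      ∑ j, (ρ * (R₂ * P₂⁻¹) j i + (-(S₂ * P₂⁻¹)) j i) * v j := by
    intro i
    have habs : ρ ^ 2 * v i = ‖μ * z (Sum.inl i)‖ := by
      rw [norm_mul, hμabs, ← hρ, hvinl i]; ring
    have hsum : ‖μ * z (Sum.inl i)‖ ≤
        (∑ j, (R₁ * P₁⁻¹) j i * (ρ * v j)) + ∑ j, (-(S₁ * P₁⁻¹)) j i * v j := by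
      rw [htop i]
      refine le_trans (norm_add_le _ _) (add_le_add ?_ ?_)
      · refine le_trans (norm_sum_le _ _) (Finset.sum_le_sum fun j _ => ?_)
        rw [norm_mul, Complex.norm_real, Real.norm_eq_abs, hvinl j,
          abs_of_nonneg (by simpa using hRP₁ j i)]
      · refine le_trans (norm_sum_le _ _) (Finset.sum_le_sum fun j _ => ?_)
        rw [norm_mul, Complex.norm_real, Real.norm_eq_abs,
          abs_of_nonneg (by simpa using hSP₁ j i)]
    have hcomb : (∑ j, (R₁ * P₁⁻¹) j i * (ρ * v j)) + ∑ j, (-(S₁ * P₁⁻¹)) j i * v j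
        = ∑ j, (ρ * (R₁ * P₁⁻¹) j i + (-(S₁ * P₁⁻¹)) j i) * v j := by
      rw [← Finset.sum_add_distrib]
      exact Finset.sum_congr rfl fun j _ => by ring
    calc ρ ^ 2 * v i = ‖μ * z (Sum.inl i)‖ := habs
      _ ≤ _ := hsum
      _ = ∑ j, (ρ * (R₁ * P₁⁻¹) j i + (-(S₁ * P₁⁻¹)) j i) * v j := hcomb
      _ ≤ ∑ j, (ρ * (R₂ * P₂⁻¹) j i + (-(S₂ * P₂⁻¹)) j i) * v j :=
          Finset.sum_le_sum fun j _ =>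
            mul_le_mul_of_nonneg_right (key j i) (hv0 j)
  -- the comparison vector
  set y : (Fin n ⊕ Fin n) → ℝ := Sum.elim (fun i => ρ * v i) v with hy
  have hynn : ∀ i, 0 ≤ y i := by
    intro i; cases i with
    | inl i => exact mul_nonneg hρ0 (hv0 i)
    | inr i => exact hv0 i
  have hyne : y ≠ 0 := by
    intro hcon
    apply hvne
    funext i
    exact congrFun hcon (Sum.inr i)
  have hW₂nn : ∀ i j, 0 ≤ (itMatII P₂ R₂ S₂) i j := by
    intro i j
    cases i with
    | inl i =>
        cases j with
        | inl j =>
            simpa [itMatII, -Matrix.transpose_mul, Matrix.transpose_apply]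
              using hRP₂ j i
        | inr j =>
            simpa [itMatII, -Matrix.transpose_mul, Matrix.transpose_apply]
              using hSP₂ j i
    | inr i =>
        cases j with
        | inl j => simp [itMatII, Matrix.one_apply]; split <;> norm_num
        | inr j => simp [itMatII]
  have hmain : ∀ i, ρ * y i ≤ ((itMatII P₂ R₂ S₂) *ᵥ y) i := by
    intro i
    cases i with
    | inl i =>
        have hcalc : ((itMatII P₂ R₂ S₂) *ᵥ y) (Sum.inl i)
            = ∑ j, (ρ * (R₂ * P₂⁻¹) j i + (-(S₂ * P₂⁻¹)) j i) * v j := by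
          simp only [itMatII, Matrix.mulVec, dotProduct, Fintype.sum_sum_type,
            hy, Matrix.fromBlocks_apply₁₁, Matrix.fromBlocks_apply₁₂,
            Matrix.transpose_apply, Matrix.neg_apply, Sum.elim_inl, Sum.elim_inr]
          rw [← Finset.sum_add_distrib]
          exact Finset.sum_congr rfl fun j _ => by ring
        rw [hcalc]
        calc ρ * y (Sum.inl i) = ρ ^ 2 * v i := by simp [hy]; ring
          _ ≤ _ := star i
    | inr i =>
        have hcalc : ((itMatII P₂ R₂ S₂) *ᵥ y) (Sum.inr i) = ρ * v i := by
          simp [itMatII, Matrix.mulVec, dotProduct, Fintype.sum_sum_type,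
            hy, Matrix.one_apply, apply_ite (fun t : ℝ => t * (ρ * v _)),
            Finset.sum_ite_eq]
        rw [hcalc]
        simp [hy]
  exact le_specRad_of_mulVec_le (itMatII P₂ R₂ S₂) hW₂nn hynn hyne hρ0 hmain
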